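/- Let B̄ be an invertible symmetric real 3×3 matrix, let (n, a, b) be an orthonormal triad of vectors in ℝ³ (n·n = a·a = b·b = 1, n·a = n·b = a·b = 0), and let f′, g′ be real numbers. Set B = (I + f′ a⊗n + g′ b⊗n) B̄ (I + f′ n⊗a + g′ n⊗b). Then B is invertible with B⁻¹ = (I − f′ n⊗a − g′ n⊗b) B̄⁻¹ (I − f′ a⊗n − g′ b⊗n), and trace B⁻¹ = trace B̄⁻¹ − 2(f′ n·(B̄⁻¹a) + g′ n·(B̄⁻¹b)) + f′² a·(B̄⁻¹a) + g′² b·(B̄⁻¹b) + 2 f′ g′ a·(B̄⁻¹b). (This is the formula for the second principal invariant I₂ of the motion.) -/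

import Mathlib

open Matrix

lemma vmv_mul_vmv (u v w x : Fin 3 → ℝ) :
    vecMulVec u v * vecMulVec w x = (v ⬝ᵥ w) • vecMulVec u x := by
  ext i j
  simp only [mul_apply, vecMulVec_apply, dotProduct, Matrix.smul_apply, smul_eq_mul]
  rw [Finset.sum_mul]
  exact Finset.sum_congr rfl fun k _ => by ring

lemma mul_vmv (M : Matrix (Fin 3) (Fin 3) ℝ) (u v : Fin 3 → ℝ) :
    M * vecMulVec u v = vecMulVec (M *ᵥ u) v := by
  ext i j
  simp [mul_apply, vecMulVec_apply, mulVec, dotProduct, Finset.sum_mul, mul_assoc]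

lemma vmv_mul (M : Matrix (Fin 3) (Fin 3) ℝ) (u v : Fin 3 → ℝ) :
    vecMulVec u v * M = vecMulVec u (v ᵥ* M) := by
  ext i j
  simp [mul_apply, vecMulVec_apply, vecMul, dotProduct, Finset.mul_sum, mul_assoc]

lemma vmv_mulVec (u v w : Fin 3 → ℝ) :
    vecMulVec u v *ᵥ w = (v ⬝ᵥ w) • u := by
  ext i
  simp only [mulVec, vecMulVec_apply, dotProduct, Pi.smul_apply, smul_eq_mul]
  rw [Finset.sum_mul]
  exact Finset.sum_congr rfl fun k _ => by ring

lemma smul_vmv (x : ℝ) (u v : Fin 3 → ℝ) :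
    vecMulVec (x • u) v = x • vecMulVec u v := by
  ext i j
  simp [vecMulVec_apply, mul_assoc]

lemma trace_vmv (u v : Fin 3 → ℝ) : (vecMulVec u v).trace = u ⬝ᵥ v := by
  simp [Matrix.trace, vecMulVec_apply, dotProduct, Matrix.diag]

set_option maxHeartbeats 2000000 in
/-- The inverse of the left Cauchy–Green tensor of the motion, and the second
principal invariant `I₂ = trace B⁻¹`. -/
theorem inv_and_trace_inv_B_formula
    (Bbar : Matrix (Fin 3) (Fin 3) ℝ) (hB : Bbar.IsSymm)
    (hBinv : IsUnit Bbar.det)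
    (n a b : Fin 3 → ℝ)
    (hnn : n ⬝ᵥ n = 1) (haa : a ⬝ᵥ a = 1) (hbb : b ⬝ᵥ b = 1)
    (hna : n ⬝ᵥ a = 0) (hnb : n ⬝ᵥ b = 0) (hab : a ⬝ᵥ b = 0)
    (f' g' : ℝ) :
    IsUnit ((1 + f' • vecMulVec a n + g' • vecMulVec b n) * Bbar *
      (1 + f' • vecMulVec n a + g' • vecMulVec n b)).det ∧
    ((1 + f' • vecMulVec a n + g' • vecMulVec b n) * Bbar *
      (1 + f' • vecMulVec n a + g' • vecMulVec n b))⁻¹ =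
      (1 - f' • vecMulVec n a - g' • vecMulVec n b) * Bbar⁻¹ *
        (1 - f' • vecMulVec a n - g' • vecMulVec b n) ∧
    ((1 + f' • vecMulVec a n + g' • vecMulVec b n) * Bbar *
      (1 + f' • vecMulVec n a + g' • vecMulVec n b))⁻¹.trace =
      Bbar⁻¹.trace
        - 2 * (f' * (n ⬝ᵥ Bbar⁻¹.mulVec a) + g' * (n ⬝ᵥ Bbar⁻¹.mulVec b))
        + f' ^ 2 * (a ⬝ᵥ Bbar⁻¹.mulVec a)
        + g' ^ 2 * (b ⬝ᵥ Bbar⁻¹.mulVec b)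
        + 2 * f' * g' * (a ⬝ᵥ Bbar⁻¹.mulVec b) := by
  have hna' : a ⬝ᵥ n = 0 := by rwa [dotProduct_comm]
  have hnb' : b ⬝ᵥ n = 0 := by rwa [dotProduct_comm]
  set C := Bbar⁻¹ with hC
  have hCs : Cᵀ = C := by
    rw [hC, transpose_nonsing_inv, hB.eq]
  have hvC : ∀ u, u ᵥ* C = C *ᵥ u := fun u => by
    conv_lhs => rw [← hCs]
    rw [vecMul_transpose]
  have hPP' : (1 + f' • vecMulVec a n + g' • vecMulVec b n) *
      (1 - f' • vecMulVec a n - g' • vecMulVec b n) = 1 := by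
    simp only [mul_sub, sub_mul, mul_add, add_mul, mul_one, one_mul,
      Matrix.smul_mul, Matrix.mul_smul, vmv_mul_vmv, hna, hnb, zero_smul,
      smul_zero]
    abel
  have hQQ' : (1 + f' • vecMulVec n a + g' • vecMulVec n b) *
      (1 - f' • vecMulVec n a - g' • vecMulVec n b) = 1 := by
    simp only [mul_sub, sub_mul, mul_add, add_mul, mul_one, one_mul,
      Matrix.smul_mul, Matrix.mul_smul, vmv_mul_vmv, hna', hnb', zero_smul,
      smul_zero]
    abel
  have hright : ((1 + f' • vecMulVec a n + g' • vecMulVec b n) * Bbar *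
      (1 + f' • vecMulVec n a + g' • vecMulVec n b)) *
      ((1 - f' • vecMulVec n a - g' • vecMulVec n b) * C *
        (1 - f' • vecMulVec a n - g' • vecMulVec b n)) = 1 := by
    calc ((1 + f' • vecMulVec a n + g' • vecMulVec b n) * Bbar *
      (1 + f' • vecMulVec n a + g' • vecMulVec n b)) *
      ((1 - f' • vecMulVec n a - g' • vecMulVec n b) * C *
        (1 - f' • vecMulVec a n - g' • vecMulVec b n))
        = (1 + f' • vecMulVec a n + g' • vecMulVec b n) * (Bbar *
          (((1 + f' • vecMulVec n a + g' • vecMulVec n b) *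
            (1 - f' • vecMulVec n a - g' • vecMulVec n b)) * C)) *
          (1 - f' • vecMulVec a n - g' • vecMulVec b n) := by
          noncomm_ring
      _ = 1 := by
          rw [hQQ', one_mul, hC, mul_nonsing_inv Bbar hBinv, mul_one, hPP']
  refine ⟨isUnit_det_of_right_inverse hright, inv_eq_right_inv hright, ?_⟩
  rw [inv_eq_right_inv hright]
  have e_aa : (C *ᵥ a) ⬝ᵥ a = a ⬝ᵥ C *ᵥ a := dotProduct_comm _ _
  have e_bb : (C *ᵥ b) ⬝ᵥ b = b ⬝ᵥ C *ᵥ b := dotProduct_comm _ _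
  have e_ab : (C *ᵥ a) ⬝ᵥ b = a ⬝ᵥ C *ᵥ b := by
    rw [dotProduct_mulVec, hvC, dotProduct_comm]
  have e_ba : (C *ᵥ b) ⬝ᵥ a = a ⬝ᵥ C *ᵥ b := by
    rw [dotProduct_comm, dotProduct_mulVec, hvC]
  have e_ba' : b ⬝ᵥ C *ᵥ a = a ⬝ᵥ C *ᵥ b := by
    rw [dotProduct_mulVec, hvC, dotProduct_comm]
  have hexp : (1 - f' • vecMulVec n a - g' • vecMulVec n b) * C *
      (1 - f' • vecMulVec a n - g' • vecMulVec b n) =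
      C - f' • vecMulVec (C *ᵥ a) n - g' • vecMulVec (C *ᵥ b) n
        - f' • vecMulVec n (C *ᵥ a) - g' • vecMulVec n (C *ᵥ b)
        + (f' * f' * (a ⬝ᵥ C *ᵥ a)) • vecMulVec n n
        + (f' * g' * (a ⬝ᵥ C *ᵥ b)) • vecMulVec n n
        + (g' * f' * (a ⬝ᵥ C *ᵥ b)) • vecMulVec n n
        + (g' * g' * (b ⬝ᵥ C *ᵥ b)) • vecMulVec n n := by
    simp only [mul_sub, sub_mul, mul_one, one_mul, Matrix.smul_mul,
      Matrix.mul_smul, vmv_mul, mul_vmv, vmv_mul_vmv, vmv_mulVec, smul_vmv,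
      hvC, smul_smul, e_aa, e_bb, e_ab, e_ba, e_ba']
    module
  rw [hexp]
  simp only [trace_add, trace_sub, trace_smul, trace_vmv, smul_eq_mul]
  have h1 : (C *ᵥ a) ⬝ᵥ n = n ⬝ᵥ C *ᵥ a := dotProduct_comm _ _
  have h2 : (C *ᵥ b) ⬝ᵥ n = n ⬝ᵥ C *ᵥ b := dotProduct_comm _ _
  rw [h1, h2, hnn]
  ring
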